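/- Let Φ be a crystallographic root system with positive system Φ⁺ and root order defined by α ≤ β iff β − α is a nonnegative integer combination of simple roots. If α, β, γ ∈ Φ⁺ with β + γ ∈ Φ⁺ and α ≤ β + γ, then α ≤ β, or α ≤ γ, or α = β′ + γ′ for some β′, γ′ ∈ Φ⁺ with β′ ≤ β and γ′ ≤ γ. -/

import Mathlib

open scoped Pointwise RealInnerProductSpace

/-- A crystallographic root system together with a choice of simple system. -/
structure RootSystemData (V : Type*) [NormedAddCommGroup V] [InnerProductSpace ℝ V] where
  Φ : Set V
  S : Set V
  finite : Φ.Finite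
  ne_zero : ∀ α ∈ Φ, α ≠ 0
  reflect_mem : ∀ α ∈ Φ, ∀ β ∈ Φ, β - (2 * (inner ℝ β α : ℝ) / (inner ℝ α α : ℝ)) • α ∈ Φ
  crystal : ∀ α ∈ Φ, ∀ β ∈ Φ, ∃ m : ℤ, 2 * (inner ℝ β α : ℝ) / (inner ℝ α α : ℝ) = (m : ℝ)
  reduced : ∀ α ∈ Φ, ∀ t : ℝ, t • α ∈ Φ → t = 1 ∨ t = -1
  S_sub : S ⊆ Φ
  S_indep : LinearIndependent ℝ ((↑) : S → V)
  decomp : ∀ α ∈ Φ, α ∈ AddSubmonoid.closure S ∨ -α ∈ AddSubmonoid.closure S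

namespace RootSystemData

variable {V : Type*} [NormedAddCommGroup V] [InnerProductSpace ℝ V] (D : RootSystemData V)

/-- The positive roots. -/
def pos : Set V := {α ∈ D.Φ | α ∈ AddSubmonoid.closure D.S}

/-- The root poset order: `α ≤ β` iff `β - α` is a nonnegative integer combination
of simple roots. -/
def rle (α β : V) : Prop := β - α ∈ AddSubmonoid.closure D.S

/-- An (order) ideal of the root poset. -/
def IsIdeal (I : Set V) : Prop :=
  I ⊆ D.pos ∧ ∀ α ∈ I, ∀ β ∈ D.pos, D.rle β α → β ∈ I

/-- The order filters complementary to a chain of ideals, with the conventions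
`J 0 = Φ⁺` (as `I 0 = ∅`) and `J i = J k` for `i > k`. -/
def Jf (k : ℕ) (I : ℕ → Set V) (i : ℕ) : Set V := D.pos \ I (min i k)

/-- A geometric chain of `k` ideals in the root poset. -/
structure IsGeomChain (k : ℕ) (I : ℕ → Set V) : Prop where
  zero : I 0 = ∅
  ideal : ∀ i, 1 ≤ i → i ≤ k → D.IsIdeal (I i)
  mono : ∀ i j, i ≤ j → j ≤ k → I i ⊆ I j
  geomI : ∀ i j, i + j ≤ k → (I i + I j) ∩ D.pos ⊆ I (i + j)
  geomJ : ∀ i j, (D.Jf k I i + D.Jf k I j) ∩ D.pos ⊆ D.Jf k I (i + j)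

/-- A chain of ideals is positive if `S ⊆ I k`. -/
def IsPositiveChain (k : ℕ) (I : ℕ → Set V) : Prop := D.S ⊆ I k

/-- The set of values `r₁ + … + r_m` over all expressions `α = α₁ + … + α_m` with
`α_i ∈ I (r i)` and `1 ≤ r i ≤ k`; its least element (when it exists) is `r_α(𝓘)`. -/
def rVals (_D : RootSystemData V) (k : ℕ) (I : ℕ → Set V) (α : V) : Set ℕ :=
  {N | ∃ m : ℕ, ∃ a : Fin m → V, ∃ r : Fin m → ℕ,
    (∀ i, 1 ≤ r i ∧ r i ≤ k ∧ a i ∈ I (r i)) ∧ (∑ i, a i) = α ∧ (∑ i, r i) = N}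

/-- The extension `𝓘̲` of a geometric chain of `k` ideals to a chain of `k+1` ideals,
with `I̲_{k+1} = ⋃_{i+j=k+1} ((I_i + I_j) ∩ Φ⁺) ∪ I_k ∪ S`. -/
def Ibar (k : ℕ) (I : ℕ → Set V) : ℕ → Set V := fun i =>
  if i ≤ k then I i
  else (⋃ (p : ℕ × ℕ) (_ : p.1 + p.2 = k + 1), (I p.1 + I p.2) ∩ D.pos) ∪ I k ∪ D.S

/-- `α` is a rank `r` indecomposable element of the chain of ideals `I`. -/
def IsIndec (k : ℕ) (I : ℕ → Set V) (r : ℕ) (α : V) : Prop :=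
  α ∈ I r ∧ IsLeast (D.rVals k I α) r ∧
  (∀ i j, i + j = r → α ∉ I i + I j) ∧
  (∀ β ∈ D.pos, ∀ t, t ≤ k → IsLeast (D.rVals k I (α + β)) t → β ∈ I (t - r))

/-- The complement of the `k`-Catalan arrangement of `Φ`. -/
def catComp (k : ℕ) : Set V :=
  {x | ∀ α ∈ D.Φ, ∀ r : ℕ, r ≤ k → (inner ℝ x α : ℝ) ≠ (r : ℝ)}

/-- A region of the `k`-Catalan arrangement: a connected component of the complement. -/
def IsRegion (k : ℕ) (R : Set V) : Prop :=
  ∃ x ∈ D.catComp k, R = connectedComponentIn (D.catComp k) x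

/-- A dominant region of the `k`-Catalan arrangement. -/
def IsDomRegion (k : ℕ) (R : Set V) : Prop :=
  D.IsRegion k R ∧ ∀ x ∈ R, ∀ α ∈ D.pos, 0 < (inner ℝ x α : ℝ)

/-- The complement of the affine Coxeter arrangement of `Φ`. -/
def affComp : Set V := {x | ∀ α ∈ D.Φ, ∀ r : ℤ, (inner ℝ x α : ℝ) ≠ (r : ℝ)}

/-- An alcove: a connected component of the complement of the affine Coxeter arrangement. -/
def IsAlcove (A : Set V) : Prop :=
  ∃ x ∈ D.affComp, A = connectedComponentIn D.affComp x

/-- The hyperplane `H_α^r` supports a facet of `R`. -/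
def IsWall (_D : RootSystemData V) (R : Set V) (α : V) (r : ℝ) : Prop :=
  ∃ x, (inner ℝ x α : ℝ) = r ∧ ∃ ε > 0, ∀ y, (inner ℝ y α : ℝ) = r → dist y x < ε → y ∈ closure R

/-- `H_α^r` is a ceiling of the dominant region (or alcove) `R`: a wall not through
the origin with `R` on the same side as the origin. -/
def IsCeiling (R : Set V) (α : V) (r : ℝ) : Prop :=
  D.IsWall R α r ∧ 0 < r ∧ ∀ x ∈ R, (inner ℝ x α : ℝ) < r

/-- `H_α^r` is a floor of the dominant region (or alcove) `R`: a wall not through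
the origin separating `R` from the origin. -/
def IsFloor (R : Set V) (α : V) (r : ℝ) : Prop :=
  D.IsWall R α r ∧ 0 < r ∧ ∀ x ∈ R, r < (inner ℝ x α : ℝ)

/-- The chain of ideals `θ(R)` associated to a dominant region `R`. -/
def theta (R : Set V) : ℕ → Set V := fun i =>
  {α ∈ D.pos | ∀ x ∈ R, (inner ℝ x α : ℝ) < (i : ℝ)}

/-- `B` is the maximal alcove of the (bounded) region corresponding to the positive chain
of ideals `I`, i.e. the alcove with `r(B,α) = r_α(𝓘)` for all positive roots `α`. -/
def IsMaxAlcoveOf (k : ℕ) (I : ℕ → Set V) (B : Set V) : Prop :=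
  D.IsAlcove B ∧ ∀ α ∈ D.pos, ∃ r : ℕ, IsLeast (D.rVals k I α) r ∧
    ∀ x ∈ B, ((r : ℝ) - 1 < (inner ℝ x α : ℝ) ∧ (inner ℝ x α : ℝ) < (r : ℝ))

/-- The root system `Φ` is irreducible. -/
def Irred : Prop :=
  ∀ Φ₁ Φ₂ : Set V, Φ₁ ∪ Φ₂ = D.Φ → (∀ a ∈ Φ₁, ∀ b ∈ Φ₂, (inner ℝ a b : ℝ) = 0) →
    Φ₁ = ∅ ∨ Φ₂ = ∅

end RootSystemData

section Aux

variable {V : Type*} [NormedAddCommGroup V] [InnerProductSpace ℝ V] (D : RootSystemData V)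

private lemma aux_inner_self_pos {x : V} (hx : x ≠ 0) : 0 < (inner ℝ x x : ℝ) :=
  lt_of_le_of_ne real_inner_self_nonneg fun h =>
    hx ((inner_self_eq_zero (𝕜 := ℝ)).mp h.symm)

private lemma aux_neg_mem {x : V} (hx : x ∈ D.Φ) : -x ∈ D.Φ := by
  have h := D.reflect_mem x hx x hx
  have hx0 : (inner ℝ x x : ℝ) ≠ 0 := ne_of_gt (aux_inner_self_pos (D.ne_zero x hx))
  have h2 : 2 * (inner ℝ x x : ℝ) / (inner ℝ x x : ℝ) = 2 := by field_simp
  rw [h2] at h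
  have h3 : x - (2 : ℝ) • x = -x := by module
  rwa [h3] at h

private lemma aux_sub_mem {x y : V} (hx : x ∈ D.Φ) (hy : y ∈ D.Φ) (hxy : x ≠ y)
    (hp : 0 < (inner ℝ x y : ℝ)) : x - y ∈ D.Φ := by
  have hxne := D.ne_zero x hx
  have hyne := D.ne_zero y hy
  have ha : 0 < (inner ℝ x x : ℝ) := aux_inner_self_pos hxne
  have hb : 0 < (inner ℝ y y : ℝ) := aux_inner_self_pos hyne
  obtain ⟨m, hm⟩ := D.crystal y hy x hx
  obtain ⟨k, hk⟩ := D.crystal x hx y hy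
  rw [real_inner_comm x y] at hk
  -- strict Cauchy-Schwarz
  have hne' : ‖y‖ • x ≠ ‖x‖ • y := by
    intro heq
    have hyn : ‖y‖ ≠ 0 := norm_ne_zero_iff.mpr hyne
    have hxv : (‖x‖ / ‖y‖) • y = x := by
      rw [div_eq_mul_inv, mul_comm, mul_smul, ← heq, smul_smul, inv_mul_cancel₀ hyn, one_smul]
    rcases D.reduced y hy (‖x‖ / ‖y‖) (by rw [hxv]; exact hx) with h1 | h1
    · rw [h1, one_smul] at hxv; exact hxy hxv.symm
    · have : (0 : ℝ) ≤ ‖x‖ / ‖y‖ := by positivity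
      rw [h1] at this; linarith
  have hcs : (inner ℝ x y : ℝ) < ‖x‖ * ‖y‖ := inner_lt_norm_mul_iff_real.mpr hne'
  have hp2 : (inner ℝ x y : ℝ) * (inner ℝ x y : ℝ) < (inner ℝ x x : ℝ) * (inner ℝ y y : ℝ) := by
    rw [real_inner_self_eq_norm_mul_norm, real_inner_self_eq_norm_mul_norm]
    nlinarith [norm_nonneg x, norm_nonneg y]
  have hmb : 2 * (inner ℝ x y : ℝ) = m * (inner ℝ y y : ℝ) := (div_eq_iff (ne_of_gt hb)).mp hm
  have hka : 2 * (inner ℝ x y : ℝ) = k * (inner ℝ x x : ℝ) := (div_eq_iff (ne_of_gt ha)).mp hk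
  have hm1 : 1 ≤ m := by
    have h0 : (0 : ℝ) < m := by nlinarith
    have : (0 : ℤ) < m := by exact_mod_cast h0
    omega
  have hk1 : 1 ≤ k := by
    have h0 : (0 : ℝ) < k := by nlinarith
    have : (0 : ℤ) < k := by exact_mod_cast h0
    omega
  have hmk : (m : ℝ) * k < 4 := by nlinarith [mul_pos ha hb]
  have hmk' : m * k < 4 := by exact_mod_cast hmk
  have : m = 1 ∨ k = 1 := by
    rcases lt_or_ge m 2 with h | h
    · left; omega
    · right; nlinarith
  rcases this with h1 | h1
  · have h := D.reflect_mem y hy x hx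
    rw [hm, h1] at h
    simpa using h
  · have h := D.reflect_mem x hx y hy
    rw [real_inner_comm x y] at h
    rw [hk, h1] at h
    simp only [Int.cast_one, one_smul] at h
    have := aux_neg_mem D h
    rwa [neg_sub] at this

private lemma aux_support {x : V} (hx : x ∈ AddSubmonoid.closure D.S) (v : V)
    (hv : 0 < (inner ℝ v x : ℝ)) :
    ∃ s ∈ D.S, 0 < (inner ℝ v s : ℝ) ∧ x - s ∈ AddSubmonoid.closure D.S := by
  revert hv
  induction hx using AddSubmonoid.closure_induction with
  | mem s hs =>
    intro hv
    exact ⟨s, hs, hv, by simpa using AddSubmonoid.zero_mem _⟩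
  | zero => intro hv; rw [inner_zero_right] at hv; linarith
  | add a b ha hb iha ihb =>
    intro hv
    rw [inner_add_right] at hv
    rcases lt_or_ge 0 (inner ℝ v a : ℝ) with h | h
    · obtain ⟨s, hs, h1, h2⟩ := iha h
      exact ⟨s, hs, h1, by
        have : a + b - s = (a - s) + b := by abel
        rw [this]; exact AddSubmonoid.add_mem _ h2 hb⟩
    · obtain ⟨s, hs, h1, h2⟩ := ihb (by linarith)
      exact ⟨s, hs, h1, by
        have : a + b - s = a + (b - s) := by abel
        rw [this]; exact AddSubmonoid.add_mem _ ha h2⟩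

private lemma aux_functional : ∃ f : V →ₗ[ℝ] ℝ, ∀ s ∈ D.S, f s = 1 := by
  have hi : LinearIndepOn ℝ id D.S := D.S_indep
  refine ⟨(Module.Basis.extend hi).sumCoords, fun s hs => ?_⟩
  have hmem : s ∈ hi.extend (Set.subset_univ D.S) := hi.subset_extend _ hs
  have h : (Module.Basis.extend hi) ⟨s, hmem⟩ = s := Module.Basis.extend_apply_self _ _
  rw [← h, Module.Basis.sumCoords_self_apply]

private lemma aux_fprops (f : V →ₗ[ℝ] ℝ) (hf : ∀ s ∈ D.S, f s = 1) {x : V}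
    (hx : x ∈ AddSubmonoid.closure D.S) :
    (∃ n : ℕ, f x = n) ∧ (f x = 0 → x = 0) := by
  induction hx using AddSubmonoid.closure_induction with
  | mem s hs =>
    refine ⟨⟨1, by simp [hf s hs]⟩, fun h => ?_⟩
    rw [hf s hs] at h; norm_num at h
  | zero => exact ⟨⟨0, by simp⟩, fun _ => rfl⟩
  | add a b ha hb iha ihb =>
    obtain ⟨⟨n, hn⟩, hz⟩ := iha
    obtain ⟨⟨m, hm⟩, hz'⟩ := ihb
    refine ⟨⟨n + m, by rw [map_add, hn, hm]; push_cast; ring⟩, fun h => ?_⟩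
    rw [map_add, hn, hm] at h
    have h2 : (0 : ℝ) ≤ n := Nat.cast_nonneg n
    have h3 : (0 : ℝ) ≤ m := Nat.cast_nonneg m
    have hn0 : (n : ℝ) = 0 := by linarith
    have hm0 : (m : ℝ) = 0 := by linarith
    rw [hz (by rw [hn]; exact hn0), hz' (by rw [hm]; exact hm0), add_zero]

private lemma aux_pos_sub (f : V →ₗ[ℝ] ℝ) (hf : ∀ s ∈ D.S, f s = 1) {ρ s : V}
    (hρ : ρ ∈ D.pos) (hs : s ∈ D.S) (hne : ρ ≠ s) (hΦ : ρ - s ∈ D.Φ) : ρ - s ∈ D.pos := by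
  rcases D.decomp _ hΦ with h | h
  · exact ⟨hΦ, h⟩
  · exfalso
    obtain ⟨⟨n, hn⟩, hz⟩ := aux_fprops D f hf h
    obtain ⟨⟨m, hm⟩, hz'⟩ := aux_fprops D f hf hρ.2
    have hm1 : 1 ≤ m := by
      rcases Nat.eq_zero_or_pos m with h' | h'
      · exact absurd (hz' (by rw [hm, h']; norm_num)) (D.ne_zero ρ hρ.1)
      · exact h'
    have hval : f (-(ρ - s)) = 1 - f ρ := by
      rw [map_neg, map_sub, hf s hs]; ring
    rw [hn, hm] at hval
    have hn0 : n = 0 := by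
      have h2 : (0 : ℝ) ≤ n := Nat.cast_nonneg n
      have h3 : (1 : ℝ) ≤ m := by exact_mod_cast hm1
      have : (n : ℝ) = 0 := by linarith
      exact_mod_cast this
    have : -(ρ - s) = 0 := hz (by rw [hn, hn0]; norm_num)
    have : ρ = s := by
      have := neg_eq_zero.mp this
      exact sub_eq_zero.mp this
    exact hne this

end Aux


/-- If `α, β, γ ∈ Φ⁺` with `β + γ ∈ Φ⁺` and `α ≤ β + γ` in the root
poset, then `α ≤ β`, or `α ≤ γ`, or `α = β′ + γ′` with `β′, γ′ ∈ Φ⁺`, `β′ ≤ β`, `γ′ ≤ γ`. -/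
theorem statement1 {V : Type*} [NormedAddCommGroup V] [InnerProductSpace ℝ V]
    (D : RootSystemData V) (α β γ : V) (hα : α ∈ D.pos) (hβ : β ∈ D.pos) (hγ : γ ∈ D.pos)
    (hβγ : β + γ ∈ D.pos) (h : D.rle α (β + γ)) :
    D.rle α β ∨ D.rle α γ ∨
      ∃ β' γ', β' ∈ D.pos ∧ γ' ∈ D.pos ∧ α = β' + γ' ∧ D.rle β' β ∧ D.rle γ' γ := by
  obtain ⟨f, hf⟩ := aux_functional D
  have hmemf : ∀ {x : V}, x ∈ AddSubmonoid.closure D.S → ∃ n : ℕ, f x = n :=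
    fun hx => (aux_fprops D f hf hx).1
  have hzf : ∀ {x : V}, x ∈ AddSubmonoid.closure D.S → f x = 0 → x = 0 :=
    fun hx => (aux_fprops D f hf hx).2
  have hposf : ∀ ρ ∈ D.pos, ∃ m : ℕ, f ρ = m ∧ 1 ≤ m := by
    intro ρ hρ
    obtain ⟨m, hm⟩ := hmemf hρ.2
    refine ⟨m, hm, ?_⟩
    rcases Nat.eq_zero_or_pos m with h' | h'
    · exact absurd (hzf hρ.2 (by rw [hm, h']; norm_num)) (D.ne_zero ρ hρ.1)
    · exact h'
  obtain ⟨n, hn⟩ := hmemf h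
  suffices H : ∀ n : ℕ, ∀ α β γ : V, f (β + γ - α) = n → α ∈ D.pos → β ∈ D.pos → γ ∈ D.pos →
      β + γ ∈ D.pos → D.rle α (β + γ) →
      (D.rle α β ∨ D.rle α γ ∨
        ∃ β' γ', β' ∈ D.pos ∧ γ' ∈ D.pos ∧ α = β' + γ' ∧ D.rle β' β ∧ D.rle γ' γ) by
    exact H n α β γ hn hα hβ hγ hβγ h
  clear hn h hα hβ hγ hβγ α β γ
  intro n
  induction n using Nat.strong_induction_on with
  | _ n IH =>
  intro α β γ hn hα hβ hγ hβγ h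
  have hclos : β + γ - α ∈ AddSubmonoid.closure D.S := h
  rcases Nat.eq_zero_or_pos n with hn0 | hn1
  · -- base case : α = β + γ
    subst hn0
    have hμ0 : β + γ - α = 0 := hzf hclos (by exact_mod_cast hn)
    have heq : α = β + γ := (sub_eq_zero.mp hμ0).symm
    refine Or.inr (Or.inr ⟨β, γ, hβ, hγ, heq, ?_, ?_⟩)
    · show β - β ∈ AddSubmonoid.closure D.S
      rw [sub_self]; exact AddSubmonoid.zero_mem _
    · show γ - γ ∈ AddSubmonoid.closure D.S
      rw [sub_self]; exact AddSubmonoid.zero_mem _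
  · -- n ≥ 1
    obtain ⟨a, hfa, ha1⟩ := hposf α hα
    have hμne : β + γ - α ≠ 0 := by
      intro h0
      rw [h0, map_zero] at hn
      have : n = 0 := by exact_mod_cast hn.symm
      omega
    have hμμ : 0 < (inner ℝ (β + γ - α) (β + γ - α) : ℝ) := aux_inner_self_pos hμne
    rcases lt_or_ge 0 (inner ℝ (β + γ) (β + γ - α) : ℝ) with hA | hB
    · -- Case A : reduce β + γ
      obtain ⟨s, hsS, hs_pos, hμs⟩ := aux_support D hclos (β + γ) hA
      have hfδ : f (β + γ) = a + n := by
        have h1 : α + (β + γ - α) = β + γ := by abel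
        have : f (β + γ) = f α + f (β + γ - α) := by rw [← map_add, h1]
        rw [this, hfa, hn]
      have hδs : β + γ ≠ s := by
        intro hcontra
        have : f (β + γ) = 1 := by rw [hcontra]; exact hf s hsS
        rw [hfδ] at this
        have : (a : ℝ) + n = 1 := by exact_mod_cast this
        have h1 : (1 : ℝ) ≤ a := by exact_mod_cast ha1
        have h2 : (1 : ℝ) ≤ n := by exact_mod_cast hn1
        linarith
      have hδsΦ : (β + γ) - s ∈ D.Φ := aux_sub_mem D hβγ.1 (D.S_sub hsS) hδs hs_pos
      have hδspos : (β + γ) - s ∈ D.pos := aux_pos_sub D f hf hβγ hsS hδs hδsΦ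
      obtain ⟨m, hmval⟩ := hmemf hμs
      have hmn : m < n := by
        have h1 : (β + γ - α) - s = (β + γ - s) - α := by abel
        have h2 : f (β + γ - α - s) = f (β + γ - α) - f s := by rw [map_sub]
        rw [hmval] at h2
        rw [hn, hf s hsS] at h2
        have : (m : ℝ) + 1 = n := by linarith
        have : m + 1 = n := by exact_mod_cast this
        omega
      have branchA : ∀ x y : V, x ∈ D.pos → y ∈ D.pos → x + y = β + γ →
          0 < (inner ℝ x s : ℝ) →
          (D.rle α x ∨ D.rle α y ∨
            ∃ x' y', x' ∈ D.pos ∧ y' ∈ D.pos ∧ α = x' + y' ∧ D.rle x' x ∧ D.rle y' y) := by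
        intro x y hx hy hxy hxs
        by_cases hxseq : x = s
        · refine Or.inr (Or.inl ?_)
          show y - α ∈ AddSubmonoid.closure D.S
          have : y - α = (β + γ - α) - s := by rw [← hxy, hxseq]; abel
          rw [this]; exact hμs
        · have hxsΦ : x - s ∈ D.Φ := aux_sub_mem D hx.1 (D.S_sub hsS) hxseq hxs
          have hxspos : x - s ∈ D.pos := aux_pos_sub D f hf hx hsS hxseq hxsΦ
          have hsum : (x - s) + y = (β + γ) - s := by rw [← hxy]; abel
          have hposum : (x - s) + y ∈ D.pos := by rw [hsum]; exact hδspos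
          have hrle : D.rle α ((x - s) + y) := by
            show (x - s) + y - α ∈ AddSubmonoid.closure D.S
            have : (x - s) + y - α = (β + γ - α) - s := by rw [← hxy]; abel
            rw [this]; exact hμs
          have hfval : f ((x - s) + y - α) = m := by
            have : (x - s) + y - α = (β + γ - α) - s := by rw [← hxy]; abel
            rw [this]; exact hmval
          rcases IH m hmn α (x - s) y hfval hα hxspos hy hposum hrle with h1 | h1 | h1
          · refine Or.inl ?_
            show x - α ∈ AddSubmonoid.closure D.S
            have hx1 : x - α = ((x - s) - α) + s := by abel
            rw [hx1]
            exact AddSubmonoid.add_mem _ h1 (AddSubmonoid.subset_closure hsS)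
          · exact Or.inr (Or.inl h1)
          · obtain ⟨x', y', hx', hy', heq, hr1, hr2⟩ := h1
            refine Or.inr (Or.inr ⟨x', y', hx', hy', heq, ?_, hr2⟩)
            show x - x' ∈ AddSubmonoid.closure D.S
            have hx1 : x - x' = ((x - s) - x') + s := by abel
            rw [hx1]
            exact AddSubmonoid.add_mem _ hr1 (AddSubmonoid.subset_closure hsS)
      have hsplit : 0 < (inner ℝ β s : ℝ) ∨ 0 < (inner ℝ γ s : ℝ) := by
        rw [inner_add_left] at hs_pos
        by_contra hc
        push_neg at hc
        linarith [hc.1, hc.2]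
      rcases hsplit with hbs | hgs
      · exact branchA β γ hβ hγ rfl hbs
      · rcases branchA γ β hγ hβ (add_comm γ β) hgs with h1 | h1 | h1
        · exact Or.inr (Or.inl h1)
        · exact Or.inl h1
        · obtain ⟨x', y', hx', hy', heq, hr1, hr2⟩ := h1
          exact Or.inr (Or.inr ⟨y', x', hy', hx', by rw [heq, add_comm], hr2, hr1⟩)
    · -- Case B
      have hαμ : (inner ℝ α (β + γ - α) : ℝ) < 0 := by
        have hδ : β + γ = α + (β + γ - α) := by abel
        have h1 : (inner ℝ (β + γ) (β + γ - α) : ℝ)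
            = inner ℝ α (β + γ - α) + inner ℝ (β + γ - α) (β + γ - α) := by
          rw [hδ, inner_add_left]; rw [← hδ]
        linarith
      rcases Nat.lt_or_ge n 2 with hn2 | hn2
      · -- n = 1
        have hn1' : n = 1 := by omega
        have hαδ : 0 < (inner ℝ α (β + γ) : ℝ) := by
          have hδ : β + γ = α + (β + γ - α) := by abel
          have h1 : (inner ℝ (β + γ) (β + γ) : ℝ)
              = inner ℝ α (β + γ) + inner ℝ (β + γ - α) (β + γ) := by
            rw (occs := .pos [1]) [hδ]
            rw [inner_add_left]
          have h2 : (inner ℝ (β + γ - α) (β + γ) : ℝ) = inner ℝ (β + γ) (β + γ - α) :=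
            real_inner_comm _ _
          have h3 : 0 < (inner ℝ (β + γ) (β + γ) : ℝ) :=
            aux_inner_self_pos (D.ne_zero _ hβγ.1)
          linarith
        have branchB : ∀ x y : V, x ∈ D.pos → y ∈ D.pos → x + y = β + γ →
            0 < (inner ℝ α x : ℝ) →
            (D.rle α x ∨ D.rle α y ∨
              ∃ x' y', x' ∈ D.pos ∧ y' ∈ D.pos ∧ α = x' + y' ∧ D.rle x' x ∧ D.rle y' y) := by
          intro x y hx hy hxy hax
          by_cases haxeq : α = x
          · refine Or.inl ?_
            show x - α ∈ AddSubmonoid.closure D.S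
            rw [← haxeq, sub_self]; exact AddSubmonoid.zero_mem _
          · have hξΦ : α - x ∈ D.Φ := aux_sub_mem D hα.1 hx.1 haxeq hax
            rcases D.decomp _ hξΦ with hc | hc
            · refine Or.inr (Or.inr ⟨x, α - x, hx, ⟨hξΦ, hc⟩, by abel, ?_, ?_⟩)
              · show x - x ∈ AddSubmonoid.closure D.S
                rw [sub_self]; exact AddSubmonoid.zero_mem _
              · show y - (α - x) ∈ AddSubmonoid.closure D.S
                have : y - (α - x) = (β + γ - α) := by rw [← hxy]; abel
                rw [this]; exact hclos
            · exfalso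
              obtain ⟨j, hj⟩ := hmemf hc
              obtain ⟨b, hfb, hb1⟩ := hposf y hy
              have hval : f (-(α - x)) = f x - f α := by rw [map_neg, map_sub]; ring
              have hfx : f x = f (β + γ) - f y := by
                rw [← hxy, map_add]; ring
              have hfδ : f (β + γ) = f α + 1 := by
                have h1 : α + (β + γ - α) = β + γ := by abel
                have : f (β + γ) = f α + f (β + γ - α) := by rw [← map_add, h1]
                rw [this, hn, hn1']; norm_num
              rw [hfx, hfδ] at hval
              rw [hj, hfb] at hval
              have hj0 : j = 0 := by
                have h2 : (0 : ℝ) ≤ j := Nat.cast_nonneg j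
                have h3 : (1 : ℝ) ≤ b := by exact_mod_cast hb1
                have : (j : ℝ) = 0 := by linarith
                exact_mod_cast this
              have : -(α - x) = 0 := hzf hc (by rw [hj, hj0]; norm_num)
              exact haxeq (sub_eq_zero.mp (neg_eq_zero.mp this))
        have hsplit : 0 < (inner ℝ α β : ℝ) ∨ 0 < (inner ℝ α γ : ℝ) := by
          rw [inner_add_right] at hαδ
          by_contra hc
          push_neg at hc
          linarith [hc.1, hc.2]
        rcases hsplit with hab | hag
        · exact branchB β γ hβ hγ rfl hab
        · rcases branchB γ β hγ hβ (add_comm γ β) hag with h1 | h1 | h1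
          · exact Or.inr (Or.inl h1)
          · exact Or.inl h1
          · obtain ⟨x', y', hx', hy', heq, hr1, hr2⟩ := h1
            exact Or.inr (Or.inr ⟨y', x', hy', hx', by rw [heq, add_comm], hr2, hr1⟩)
      · -- n ≥ 2 : raise α
        obtain ⟨s, hsS, hs_neg, hμs⟩ := aux_support D hclos (-α)
          (by rw [inner_neg_left]; linarith)
        have hαs_neg : (inner ℝ α s : ℝ) < 0 := by
          rw [inner_neg_left] at hs_neg; linarith
        have hnegs : -s ∈ D.Φ := aux_neg_mem D (D.S_sub hsS)
        have hαnegs : α ≠ -s := by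
          intro hcontra
          have : f α = -1 := by
            rw [hcontra, map_neg, hf s hsS]
          rw [hfa] at this
          have h2 : (0 : ℝ) ≤ a := Nat.cast_nonneg a
          linarith [this ▸ h2]
        have hsub : α - (-s) ∈ D.Φ := aux_sub_mem D hα.1 hnegs hαnegs
          (by rw [inner_neg_right]; linarith)
        have hαsΦ : α + s ∈ D.Φ := by rwa [sub_neg_eq_add] at hsub
        have hαspos : α + s ∈ D.pos :=
          ⟨hαsΦ, AddSubmonoid.add_mem _ hα.2 (AddSubmonoid.subset_closure hsS)⟩
        have hrle1 : D.rle (α + s) (β + γ) := by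
          show β + γ - (α + s) ∈ AddSubmonoid.closure D.S
          have : β + γ - (α + s) = (β + γ - α) - s := by abel
          rw [this]; exact hμs
        obtain ⟨m, hmval⟩ := hmemf hμs
        have hmn : m < n := by
          have h2 : f (β + γ - α - s) = f (β + γ - α) - f s := by rw [map_sub]
          rw [hmval, hn, hf s hsS] at h2
          have : (m : ℝ) + 1 = n := by linarith
          have : m + 1 = n := by exact_mod_cast this
          omega
        have hfval : f (β + γ - (α + s)) = m := by
          have : β + γ - (α + s) = (β + γ - α) - s := by abel
          rw [this]; exact hmval
        rcases IH m hmn (α + s) β γ hfval hαspos hβ hγ hβγ hrle1 with h1 | h1 | h1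
        · refine Or.inl ?_
          show β - α ∈ AddSubmonoid.closure D.S
          have hx1 : β - α = (β - (α + s)) + s := by abel
          rw [hx1]
          exact AddSubmonoid.add_mem _ h1 (AddSubmonoid.subset_closure hsS)
        · refine Or.inr (Or.inl ?_)
          show γ - α ∈ AddSubmonoid.closure D.S
          have hx1 : γ - α = (γ - (α + s)) + s := by abel
          rw [hx1]
          exact AddSubmonoid.add_mem _ h1 (AddSubmonoid.subset_closure hsS)
        · obtain ⟨β', γ', hβ', hγ', heq, hr1, hr2⟩ := h1
          have hsum : β' + γ' ∈ D.pos := by rw [← heq]; exact hαspos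
          have hrle2 : D.rle α (β' + γ') := by
            show β' + γ' - α ∈ AddSubmonoid.closure D.S
            rw [← heq]
            have : α + s - α = s := by abel
            rw [this]; exact AddSubmonoid.subset_closure hsS
          have hfval2 : f (β' + γ' - α) = (1 : ℕ) := by
            rw [← heq]
            have : α + s - α = s := by abel
            rw [this, hf s hsS]; norm_num
          rcases IH 1 (by omega) α β' γ' hfval2 hα hβ' hγ' hsum hrle2 with h2 | h2 | h2
          · refine Or.inl ?_
            show β - α ∈ AddSubmonoid.closure D.S
            have hx1 : β - α = (β - β') + (β' - α) := by abel
            rw [hx1]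
            exact AddSubmonoid.add_mem _ hr1 h2
          · refine Or.inr (Or.inl ?_)
            show γ - α ∈ AddSubmonoid.closure D.S
            have hx1 : γ - α = (γ - γ') + (γ' - α) := by abel
            rw [hx1]
            exact AddSubmonoid.add_mem _ hr2 h2
          · obtain ⟨β'', γ'', hβ'', hγ'', heq2, hr1', hr2'⟩ := h2
            refine Or.inr (Or.inr ⟨β'', γ'', hβ'', hγ'', heq2, ?_, ?_⟩)
            · show β - β'' ∈ AddSubmonoid.closure D.S
              have hx1 : β - β'' = (β - β') + (β' - β'') := by abel
              rw [hx1]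
              exact AddSubmonoid.add_mem _ hr1 hr1'
            · show γ - γ'' ∈ AddSubmonoid.closure D.S
              have hx1 : γ - γ'' = (γ - γ') + (γ' - γ'') := by abel
              rw [hx1]
              exact AddSubmonoid.add_mem _ hr2 hr2'
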